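/- With n = 2m and Δ_n := ∑_{k=0}^{n−1} (n−k)(k+1) x_{k+1} ∂/∂x_k on R_n, for 0 ≤ i ≤ m one has π_{m,n}(Δ_n^m(x_i x_{m−i})) = C(m, m−i) · x_0^2 · ((n−i)!/i!) · ((m+i)!/(m−i)!). -/

import Mathlib

open MvPolynomial Finset

open Fin.NatCast

noncomputable def Dw (K : Type) [CommRing K] (n : ℕ) :
    Derivation K (MvPolynomial (Fin (n + 1)) K) (MvPolynomial (Fin (n + 1)) K) :=
  MvPolynomial.mkDerivation K fun i =>
    if i.1 = 0 then 0 else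
      MvPolynomial.X ⟨i.1 - 1, Nat.lt_of_le_of_lt (Nat.sub_le _ _) i.isLt⟩

noncomputable def piHom (K : Type) [CommRing K] (m n : ℕ) :
    MvPolynomial (Fin (n + 1)) K →ₐ[K] MvPolynomial (Fin (m + 1)) K :=
  MvPolynomial.aeval fun i : Fin (n + 1) =>
    if i.1 < n - m then 0 else MvPolynomial.X ((i.1 - (n - m) : ℕ) : Fin (m + 1))

noncomputable def Δw (K : Type) [CommRing K] (n : ℕ) :
    Derivation K (MvPolynomial (Fin (n + 1)) K) (MvPolynomial (Fin (n + 1)) K) :=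
  MvPolynomial.mkDerivation K fun k =>
    (((n - k.1) * (k.1 + 1) : ℕ) : K) •
      if h : k.1 < n then MvPolynomial.X ⟨k.1 + 1, Nat.succ_lt_succ h⟩ else 0

section aux

variable {R A : Type*} [CommRing R] [CommRing A] [Algebra R A]

theorem iter_leibniz (D : Derivation R A A) (n : ℕ) (p q : A) :
    (⇑D)^[n] (p * q) =
      ∑ k ∈ range n.succ, (n.choose k • ((⇑D)^[n - k] p * (⇑D)^[k] q)) := by
  induction n with
  | zero => simp [Finset.range]
  | succ n IH =>
    calc
      (⇑D)^[n + 1] (p * q) =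
          D (∑ k ∈ range n.succ,
              n.choose k • ((⇑D)^[n - k] p * (⇑D)^[k] q)) := by
        rw [Function.iterate_succ_apply', IH]
      _ = (∑ k ∈ range n.succ,
            n.choose k • ((⇑D)^[n - k + 1] p * (⇑D)^[k] q)) +
          ∑ k ∈ range n.succ,
            n.choose k • ((⇑D)^[n - k] p * (⇑D)^[k + 1] q) := by
        rw [map_sum]
        simp_rw [map_nsmul, Derivation.leibniz, smul_eq_mul, Function.iterate_succ_apply',
          smul_add, sum_add_distrib]
        rw [add_comm]
        congr 1 <;> exact sum_congr rfl fun k _ => by push_cast [nsmul_eq_mul]; ring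
      _ = (∑ k ∈ range n.succ,
                n.choose k.succ • ((⇑D)^[n - k] p * (⇑D)^[k + 1] q)) +
              1 • ((⇑D)^[n + 1] p * (⇑D)^[0] q) +
            ∑ k ∈ range n.succ, n.choose k • ((⇑D)^[n - k] p * (⇑D)^[k + 1] q) :=
        ?_
      _ = ((∑ k ∈ range n.succ, n.choose k • ((⇑D)^[n - k] p * (⇑D)^[k + 1] q)) +
              ∑ k ∈ range n.succ,
                n.choose k.succ • ((⇑D)^[n - k] p * (⇑D)^[k + 1] q)) +
            1 • ((⇑D)^[n + 1] p * (⇑D)^[0] q) := by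
        rw [add_comm, add_assoc]
      _ = (∑ i ∈ range n.succ,
              (n + 1).choose (i + 1) • ((⇑D)^[n + 1 - (i + 1)] p * (⇑D)^[i + 1] q)) +
            1 • ((⇑D)^[n + 1] p * (⇑D)^[0] q) := by
        simp_rw [Nat.choose_succ_succ, Nat.succ_sub_succ, add_smul, sum_add_distrib]
      _ = ∑ k ∈ range n.succ.succ,
            n.succ.choose k • ((⇑D)^[n.succ - k] p * (⇑D)^[k] q) := by
        rw [sum_range_succ' _ n.succ, Nat.choose_zero_right, tsub_zero]
    congr
    refine (sum_range_succ' _ _).trans (congr_arg₂ (· + ·) ?_ ?_)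
    · rw [sum_range_succ, Nat.choose_succ_self, zero_smul, add_zero]
      refine sum_congr rfl fun k hk => ?_
      rw [mem_range] at hk
      congr
      omega
    · rw [Nat.choose_zero_right, tsub_zero]

end aux

def cc (n a j : ℕ) : ℕ := ∏ k ∈ range j, (n - (a + k)) * (a + k + 1)

theorem iterX (K : Type) [CommRing K] (n a j : ℕ) (h : a + j ≤ n) :
    (⇑(Δw K n))^[j] (X ⟨a, by omega⟩) =
      ((cc n a j : ℕ) : K) • X (⟨a + j, by omega⟩ : Fin (n + 1)) := by
  induction j with
  | zero => simp [cc]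
  | succ j IH =>
    rw [Function.iterate_succ_apply', IH (by omega)]
    rw [Derivation.map_smul]
    show _ • (Δw K n) (X ⟨a + j, _⟩) = _
    rw [Δw, MvPolynomial.mkDerivation_X]
    have hlt : a + j < n := by omega
    rw [dif_pos hlt, smul_smul, ← Nat.cast_mul]
    have : cc n a j * ((n - (a + j)) * (a + j + 1)) = cc n a (j + 1) := by
      rw [cc, cc, prod_range_succ]
    rw [this]
    congr 1

theorem cc_fact (n a j : ℕ) (h : a + j ≤ n) :
    cc n a j * ((n - (a + j)).factorial * a.factorial)
      = (n - a).factorial * (a + j).factorial := by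
  induction j with
  | zero => simp [cc]
  | succ j IH =>
    have h1 : a + j ≤ n := by omega
    have e : cc n a (j + 1) = cc n a j * ((n - (a + j)) * (a + j + 1)) := by
      rw [cc, cc, prod_range_succ]
    have e2 : (n - (a + j)) * (n - (a + (j+1))).factorial = (n - (a + j)).factorial := by
      have : n - (a + j) = (n - (a + (j + 1))) + 1 := by omega
      rw [this, Nat.factorial_succ]
    calc cc n a (j+1) * ((n - (a + (j+1))).factorial * a.factorial)
        = (a + j + 1) * ((cc n a j * ((n - (a+j)) * (n - (a + (j+1))).factorial)) * a.factorial) := by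
          rw [e]; ring
      _ = (a + j + 1) * (cc n a j * ((n - (a+j)).factorial * a.factorial)) := by rw [e2]; ring
      _ = (a + j + 1) * ((n - a).factorial * (a + j).factorial) := by rw [IH h1]
      _ = (n - a).factorial * (a + (j+1)).factorial := by
          have : (a + (j+1)).factorial = (a + j + 1) * (a + j).factorial := by
            rw [show a + (j+1) = (a+j)+1 by ring, Nat.factorial_succ]
          rw [this]; ring

theorem piX (K : Type) [CommRing K] (m t : ℕ) (ht : t < 2 * m + 1) :
    piHom K m (2 * m) (X ⟨t, ht⟩)
      = if t < m then 0 else X ((t - m : ℕ) : Fin (m + 1)) := by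
  rw [piHom, aeval_X]
  have : 2 * m - m = m := by omega
  simp only [this]

set_option maxHeartbeats 2000000 in
theorem stmt13 (K : Type) [Field K] [CharZero K] (m i : ℕ) (hi : i ≤ m) :
    piHom K m (2 * m)
        ((⇑(Δw K (2 * m)))^[m]
          (X ((i : ℕ) : Fin (2 * m + 1)) * X ((m - i : ℕ) : Fin (2 * m + 1))))
      = MvPolynomial.C ((m.choose (m - i) : K) *
            (((2 * m - i).factorial : K) / (i.factorial : K)) *
            (((m + i).factorial : K) / ((m - i).factorial : K))) *
          X ((0 : ℕ) : Fin (m + 1)) ^ 2 := by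
  have hii : ((i : ℕ) : Fin (2 * m + 1)) = ⟨i, by omega⟩ := by
    ext; simp [Fin.val_natCast, Nat.mod_eq_of_lt (show i < 2 * m + 1 by omega)]
  have hmi : ((m - i : ℕ) : Fin (2 * m + 1)) = ⟨m - i, by omega⟩ := by
    ext; simp [Fin.val_natCast, Nat.mod_eq_of_lt (show m - i < 2 * m + 1 by omega)]
  rw [hii, hmi, iter_leibniz (Δw K (2 * m)) m, map_sum]
  clear hii hmi
  have key : ∀ k ∈ range (m + 1),
      piHom K m (2 * m) (m.choose k •
        ((⇑(Δw K (2 * m)))^[m - k] (X ⟨i, by omega⟩) *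
         (⇑(Δw K (2 * m)))^[k] (X ⟨m - i, by omega⟩)))
      = m.choose k • (((cc (2 * m) i (m - k) : ℕ) : K) •
          (if i + (m - k) < m then 0 else X ((i + (m - k) - m : ℕ) : Fin (m + 1))) *
        ((cc (2 * m) (m - i) k : ℕ) : K) •
          (if (m - i) + k < m then 0 else X (((m - i) + k - m : ℕ) : Fin (m + 1)))) := by
    intro k hk
    rw [mem_range] at hk
    rw [iterX K (2 * m) i (m - k) (by omega)]
    rw [iterX K (2 * m) (m - i) k (by omega)]
    rw [map_nsmul]
    rw [map_mul]
    rw [map_smul, map_smul]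
    rw [piX, piX]
  rw [sum_congr rfl key]
  rw [Finset.sum_eq_single_of_mem i (mem_range.2 (by omega))]
  · have e1 : i + (m - i) = m := by omega
    have e2 : (m - i) + i = m := by omega
    rw [e1, e2]
    rw [show m - m = 0 from by omega]
    -- now an equality of C-multiples of X 0 ^ 2
    have hm : (m.factorial : K) ≠ 0 := Nat.cast_ne_zero.2 m.factorial_ne_zero
    have hifact : (i.factorial : K) ≠ 0 := Nat.cast_ne_zero.2 i.factorial_ne_zero
    have hmifact : ((m - i).factorial : K) ≠ 0 := Nat.cast_ne_zero.2 (m - i).factorial_ne_zero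
    have hc1 : ((cc (2 * m) i (m - i) : ℕ) : K) = ((2 * m - i).factorial : K) / i.factorial := by
      have h := congrArg (Nat.cast : ℕ → K) (cc_fact (2 * m) i (m - i) (by omega))
      push_cast at h
      rw [e1, show 2 * m - m = m by omega] at h
      rw [eq_div_iff hifact]
      apply mul_right_cancel₀ hm
      linear_combination h
    have hc2 : ((cc (2 * m) (m - i) i : ℕ) : K) = ((m + i).factorial : K) / (m - i).factorial := by
      have h := congrArg (Nat.cast : ℕ → K) (cc_fact (2 * m) (m - i) i (by omega))
      push_cast at h
      rw [e2, show 2 * m - m = m by omega, show 2 * m - (m - i) = m + i by omega] at h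
      rw [eq_div_iff hmifact]
      apply mul_right_cancel₀ hm
      linear_combination h
    have hcast : ((m.choose i : ℕ) : MvPolynomial (Fin (m + 1)) K)
        = MvPolynomial.C ((m.choose i : ℕ) : K) := by
      rw [MvPolynomial.C_eq_coe_nat]
    rw [Nat.choose_symm hi, ← hc1, ← hc2]
    simp only [Nat.sub_self, lt_self_iff_false, if_false]
    rw [MvPolynomial.smul_eq_C_mul, MvPolynomial.smul_eq_C_mul, nsmul_eq_mul, hcast,
      map_mul, map_mul]
    ring
  · intro k hk hne
    rw [mem_range] at hk
    rcases lt_or_gt_of_ne hne with hlt | hgt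
    · rw [if_pos (show (m - i) + k < m by omega)]
      simp
    · rw [if_pos (show i + (m - k) < m by omega)]
      simp
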